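/- Let k ≥ 12 be an integer, let φ be a real number, and set c = exp((φ + π/k)√−1). Let Γ′ be the semi-open sector Γ′ = { r·exp(ψ√−1) : r ≥ 0, ψ ≡ φ − 2π/k + μ (mod 2π) for some 0 ≤ μ < 6π/k }, i.e., the union of the sector with angular interval [φ, φ + 2π/k) and its two adjacent sectors of angular width 2π/k on both sides. Then every z ∈ ℂ \ Γ′ satisfies |c − z| ≥ sin(3π/k); i.e., the distance from the center c to the exterior of Γ′ is at least sin(3π/k). -/

import Mathlib

lemma abs_one_sub_mul_exp_sq (r δ : ℝ) :
    (‖1 - (r:ℂ) * Complex.exp (δ * Complex.I)‖)^2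
      = 1 - 2*r*Real.cos δ + r^2 := by
  rw [Complex.sq_norm, Complex.normSq_apply]
  simp [Complex.exp_mul_I, Complex.cos_ofReal_re, Complex.sin_ofReal_re]
  nlinarith [Real.sin_sq_add_cos_sq δ]

lemma sin_sq_le_key (s δ r : ℝ) (hs0 : 0 < s) (hs : s ≤ Real.pi/2) (h1 : s ≤ δ)
    (h2 : δ ≤ 2*Real.pi - s) (hr : 0 ≤ r) :
    Real.sin s ^ 2 ≤ 1 - 2*r*Real.cos δ + r^2 := by
  have hsle : Real.sin s ≤ 1 := Real.sin_le_one s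
  have hsge : 0 ≤ Real.sin s :=
    Real.sin_nonneg_of_nonneg_of_le_pi hs0.le (by linarith [Real.pi_pos])
  rcases le_or_gt (Real.cos δ) 0 with h | h
  · nlinarith
  · have hcos : Real.cos δ ≤ Real.cos s := by
      rcases le_or_gt δ Real.pi with hδ | hδ
      · exact Real.cos_le_cos_of_nonneg_of_le_pi hs0.le hδ h1
      · have : Real.cos δ = Real.cos (2*Real.pi - δ) := by
          rw [Real.cos_two_pi_sub]
        rw [this]
        exact Real.cos_le_cos_of_nonneg_of_le_pi hs0.le (by linarith) (by linarith)
    nlinarith [Real.sin_sq_add_cos_sq δ, Real.sin_sq_add_cos_sq s,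
      sq_nonneg (r - Real.cos δ), mul_self_le_mul_self h.le hcos]

/-- Part (i) of Theorem 7.3 of the paper: for the uniform `k`-partition of the
unit circle (`k ≥ 12`), the midpoint `c = e^{(φ + π/k)i}` of an arc has
distance at least `sin(3π/k)` from the exterior of the union `Γ'` of its own
sector `[φ, φ + 2π/k)` and the two adjacent sectors of angular width `2π/k`. -/
theorem dist_center_to_exterior_of_extended_sector (k : ℕ) (hk : 12 ≤ k) (φ : ℝ)
    (c : ℂ) (hc : c = Complex.exp ((φ + Real.pi / k) * Complex.I)) :
    ∀ z : ℂ,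
      z ∉ {w : ℂ | ∃ r : ℝ, 0 ≤ r ∧ ∃ μ : ℝ, 0 ≤ μ ∧ μ < 6 * Real.pi / k ∧
          w = r * Complex.exp ((φ - 2 * Real.pi / k + μ) * Complex.I)} →
      Real.sin (3 * Real.pi / k) ≤ ‖c - z‖ := by
  intro z hz
  have hπ := Real.pi_pos
  have hk0 : (0:ℝ) < k := by positivity
  have hk12 : (12:ℝ) ≤ k := by exact_mod_cast hk
  -- reduce the argument of z modulo 2π relative to the base angle
  set base : ℝ := φ - 2 * Real.pi / k with hbase
  set d : ℝ := Complex.arg z - base with hd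
  set n : ℤ := ⌊d / (2*Real.pi)⌋ with hn
  set μ0 : ℝ := d - 2*Real.pi*n with hμ0
  have h2π : (0:ℝ) < 2*Real.pi := by linarith
  have hμ0a : 0 ≤ μ0 := by
    have := Int.sub_floor_div_mul_nonneg d h2π
    rw [hμ0]; linarith [this]
  have hμ0b : μ0 < 2*Real.pi := by
    have := Int.sub_floor_div_mul_lt d h2π
    rw [hμ0]; linarith [this]
  have hexp : Complex.exp (((base + μ0 : ℝ)) * Complex.I) = Complex.exp (Complex.arg z * Complex.I) := by
    have heq : ((base + μ0 : ℝ) : ℂ) * Complex.I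
        = (Complex.arg z : ℂ) * Complex.I - (n : ℂ) * (2 * (Real.pi : ℂ) * Complex.I) := by
      rw [hμ0, hd]
      push_cast
      ring
    rw [heq, Complex.exp_sub, Complex.exp_int_mul_two_pi_mul_I, div_one]
  have hzrep : z = (‖z‖ : ℂ) * Complex.exp (((base + μ0 : ℝ)) * Complex.I) := by
    rw [hexp, Complex.norm_mul_exp_arg_mul_I]
  -- non-membership forces μ0 ≥ 6π/k
  have hμ : 6 * Real.pi / k ≤ μ0 := by
    by_contra h
    push_neg at h
    refine hz ⟨‖z‖, norm_nonneg z, μ0, hμ0a, h, ?_⟩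
    have hang : ((base + μ0 : ℝ) : ℂ) * Complex.I
        = ((φ:ℂ) - 2 * (Real.pi:ℂ) / (k:ℂ) + (μ0:ℂ)) * Complex.I := by
      rw [hbase]; push_cast; ring
    exact hzrep.trans (by rw [hang])
  -- rewrite c - z
  set s : ℝ := 3 * Real.pi / k with hs
  set δ : ℝ := μ0 - s with hδ
  set R : ℝ := ‖z‖ with hR
  have hcz : c - z = Complex.exp ((↑(φ + Real.pi / k) : ℂ) * Complex.I)
      * (1 - (R : ℂ) * Complex.exp ((δ:ℝ) * Complex.I)) := by
    rw [hc, hzrep]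
    have heq2 : ((base + μ0 : ℝ) : ℂ) * Complex.I
        = (↑(φ + Real.pi / k) : ℂ) * Complex.I + ((δ:ℝ):ℂ) * Complex.I := by
      rw [hδ, hs, hbase]
      push_cast
      ring
    rw [heq2, Complex.exp_add]
    push_cast
    ring
  have habs : ‖c - z‖
      = ‖1 - (R : ℂ) * Complex.exp ((δ:ℝ) * Complex.I)‖ := by
    rw [hcz, norm_mul, Complex.norm_exp_ofReal_mul_I, one_mul]
  -- apply the key inequality
  have hs0 : 0 < s := by rw [hs]; positivity
  have hsπ : s ≤ Real.pi / 2 := by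
    rw [hs, div_le_div_iff₀ hk0 (by norm_num : (0:ℝ) < 2)]
    nlinarith
  have h1 : s ≤ δ := by
    rw [hδ, hs]
    have : 6 * Real.pi / k = 2 * (3 * Real.pi / k) := by ring
    rw [this] at hμ
    linarith
  have h2 : δ ≤ 2*Real.pi - s := by
    rw [hδ]
    have hsp : 0 < s := hs0
    linarith
  have hRn : 0 ≤ R := by rw [hR]; exact norm_nonneg z
  have key := sin_sq_le_key s δ R hs0 hsπ h1 h2 hRn
  rw [← abs_one_sub_mul_exp_sq R δ] at key
  have hsge : 0 ≤ Real.sin s :=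
    Real.sin_nonneg_of_nonneg_of_le_pi hs0.le (by linarith)
  rw [habs]
  calc Real.sin s = Real.sqrt (Real.sin s ^ 2) := (Real.sqrt_sq hsge).symm
    _ ≤ Real.sqrt ((‖1 - (R : ℂ) * Complex.exp ((δ:ℝ) * Complex.I)‖)^2) :=
        Real.sqrt_le_sqrt key
    _ = _ := Real.sqrt_sq (norm_nonneg _)
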